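/- For every natural number n ≥ 5, the simple graph on the vertex set {1, 2, …, n−1} with an edge between distinct i and j if and only if i + j is not divisible by n, contains a cycle passing through all n−1 vertices (i.e., a Hamiltonian cycle, hence in particular a cycle of length n−1). -/

import Mathlib

/-- The generalized Dynkin diagram of `𝔅(C_n)`: vertices `1, …, n−1`, with an edge between
distinct `i` and `j` iff `n ∤ (i+j)`. -/
def dynkinGraph (n : ℕ) : SimpleGraph {i : ℕ // 1 ≤ i ∧ i ≤ n - 1} where
  Adj a b := a ≠ b ∧ ¬ (n ∣ (a.1 + b.1))
  symm := ⟨by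
    rintro a b ⟨h1, h2⟩
    exact ⟨h1.symm, by rwa [Nat.add_comm]⟩⟩
  loopless := ⟨fun a h => h.1 rfl⟩

open SimpleGraph List

/-- Build a walk from a chain. -/
def mkWalk {V : Type*} {G : SimpleGraph V} :
    ∀ (l : List V) (u v : V), List.Chain G.Adj u (l ++ [v]) → G.Walk u v
  | [], _, _, hc => Walk.cons (List.chain_cons.1 hc).1 Walk.nil
  | a :: l, _, v, hc =>
      Walk.cons (List.chain_cons.1 hc).1 (mkWalk l a v (List.chain_cons.1 hc).2)

lemma mkWalk_support {V : Type*} {G : SimpleGraph V} :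
    ∀ (l : List V) (u v : V) (hc : List.Chain G.Adj u (l ++ [v])),
      (mkWalk l u v hc).support = u :: (l ++ [v])
  | [], _, _, _ => rfl
  | a :: l, u, v, hc => by
      simp [mkWalk, mkWalk_support l a v (List.chain_cons.1 hc).2]

lemma mkWalk_length {V : Type*} {G : SimpleGraph V} :
    ∀ (l : List V) (u v : V) (hc : List.Chain G.Adj u (l ++ [v])),
      (mkWalk l u v hc).length = l.length + 1
  | [], _, _, _ => rfl
  | a :: l, u, v, hc => by
      simp [mkWalk, mkWalk_length l a v (List.chain_cons.1 hc).2]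

/-- In a path from `a` to `v` of length at least 2 with `a ≠ v`,
the edge `s(v, a)` does not occur. -/
lemma not_mem_edges_of_isPath {V : Type*} {G : SimpleGraph V} :
    ∀ {a v : V} (p : G.Walk a v), p.IsPath → a ≠ v → 2 ≤ p.length →
      s(v, a) ∉ p.edges := by
  intro a v p hp hav hlen he
  cases p with
  | nil => simp at hlen
  | @cons _ x _ hax q =>
    rw [Walk.edges_cons, List.mem_cons] at he
    rcases he with he | he
    · rw [Sym2.eq_iff] at he
      rcases he with ⟨h1, _⟩ | ⟨h1, h2⟩
      · exact hav h1.symm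
      · subst h1
        cases q with
        | nil => simp [Walk.length] at hlen
        | @cons _ y _ hvy r =>
          have hmem : v ∈ r.support := Walk.end_mem_support r
          have hnd := hp.support_nodup
          rw [Walk.support_cons, List.nodup_cons] at hnd
          have hnd2 := hnd.2
          rw [Walk.support_cons, List.nodup_cons] at hnd2
          exact hnd2.1 hmem
    · have : a ∈ q.support := Walk.snd_mem_support_of_mem_edges q he
      have hnd := hp.support_nodup
      rw [Walk.support_cons, List.nodup_cons] at hnd
      exact hnd.1 this

/-- From a cyclically-adjacent nodup list containing every vertex, get a Hamiltonian cycle. -/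
lemma ham_of_list {V : Type*} [DecidableEq V] {G : SimpleGraph V}
    (v a : V) (rest : List V) (hrest : rest ≠ [])
    (hchain : List.Chain G.Adj v ((a :: rest) ++ [v]))
    (hnd : (v :: a :: rest).Nodup)
    (hall : ∀ w : V, w ∈ v :: a :: rest) :
    ∃ c : G.Walk v v, c.IsHamiltonianCycle := by
  have hc := List.chain_cons.1 hchain
  set p : G.Walk a v := mkWalk rest a v hc.2 with hpdef
  have hsupp : p.support = a :: (rest ++ [v]) := mkWalk_support _ _ _ _
  have hperm : (a :: (rest ++ [v])).Perm (v :: a :: rest) := by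
    have : ((a :: rest) ++ [v]).Perm ([v] ++ (a :: rest)) := List.perm_append_comm
    simpa using this
  have hpath : p.IsPath := by
    rw [Walk.isPath_def, hsupp]
    exact hperm.nodup_iff.2 hnd
  have hav : a ≠ v := by
    rw [List.nodup_cons] at hnd
    intro h; exact hnd.1 (h ▸ List.mem_cons_self)
  have hlen : 2 ≤ p.length := by
    rw [show p.length = rest.length + 1 from mkWalk_length _ _ _ _]
    cases rest with
    | nil => exact absurd rfl hrest
    | cons b t => simp
  have hnotmem : s(v, a) ∉ p.edges := not_mem_edges_of_isPath p hpath hav hlen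
  refine ⟨Walk.cons hc.1 p, ?_⟩
  rw [Walk.isHamiltonianCycle_iff_isCycle_and_support_count_tail_eq_one]
  constructor
  · exact (Walk.cons_isCycle_iff p hc.1).2 ⟨hpath, hnotmem⟩
  · intro b
    have : (Walk.cons hc.1 p).support.tail = p.support := by
      simp [Walk.support_cons]
    rw [this, hsupp, hperm.count_eq]
    exact List.count_eq_one_of_mem hnd (hall b)

/-- The pivot vertex. -/
def hh (n : ℕ) : ℕ := if n % 2 = 0 then 2 else n / 2

lemma hh_bounds {n : ℕ} (hn : 5 ≤ n) : 2 ≤ hh n ∧ hh n ≤ n - 3 := by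
  unfold hh
  split <;> omega

/-- The Hamiltonian circuit as a list of naturals. -/
def natL (n : ℕ) : List ℕ :=
  List.range' 1 (hh n - 1) ++ List.range' (hh n + 1) (n - 1 - hh n) ++ [hh n]

/-- Variant taking a list with explicit head. -/
lemma ham_of_list' {V : Type*} [DecidableEq V] {G : SimpleGraph V}
    (l : List V) (v : V) (hlen : 4 ≤ l.length) (hhead : l.head? = some v)
    (hchain : List.Chain' G.Adj (l ++ [v]))
    (hnd : l.Nodup) (hall : ∀ w : V, w ∈ l) :
    ∃ c : G.Walk v v, c.IsHamiltonianCycle := by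
  rcases l with _ | ⟨v', l⟩
  · simp at hlen
  rcases l with _ | ⟨a, l⟩
  · simp at hlen
  rcases l with _ | ⟨b, l⟩
  · simp at hlen
  have hv : v' = v := by simpa using hhead
  subst hv
  exact ham_of_list _ a (b :: l) (by simp) hchain hnd hall

lemma dvd_window {n m : ℕ} (h : n ∣ m) (h1 : 0 < m) (h2 : m < 2 * n) : m = n := by
  rcases h with ⟨c, rfl⟩
  rcases Nat.lt_or_ge c 2 with hc | hc
  · interval_cases c <;> omega
  · exfalso; have := Nat.mul_le_mul_left n hc; omega

lemma not_dvd_of_window {n m : ℕ} (h1 : 0 < m) (h2 : m < 2 * n) (h3 : m ≠ n) : ¬ n ∣ m :=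
  fun h => h3 (dvd_window h h1 h2)

lemma hh_def {n : ℕ} : (n % 2 = 0 ∧ hh n = 2) ∨ (n % 2 = 1 ∧ hh n = n / 2) := by
  unfold hh
  split <;> omega

lemma chain'_range'_of {S : ℕ → ℕ → Prop} :
    ∀ (k s : ℕ), (∀ i, s ≤ i → i + 1 < s + k → S i (i + 1)) →
      List.Chain' S (List.range' s k)
  | 0, s, _ => List.IsChain.nil
  | 1, s, _ => List.IsChain.singleton _
  | (k + 2), s, h => by
      rw [List.range'_succ, List.range'_succ]
      show List.IsChain _ _
      rw [List.isChain_cons_cons]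
      refine ⟨h s le_rfl (by omega), ?_⟩
      rw [← List.range'_succ]
      exact chain'_range'_of (k + 1) (s + 1) (fun i hi1 hi2 => h i (by omega) (by omega))

lemma natL_chain {n : ℕ} (hn : 5 ≤ n) :
    List.Chain' (fun a b => a ≠ b ∧ ¬ n ∣ (a + b)) (natL n ++ [1]) := by
  obtain ⟨hH2, hH3⟩ := hh_bounds hn
  set H := hh n with hHdef
  have hkey : ∀ i, 1 ≤ i → i + 1 ≤ n - 1 → i ≠ H → ¬ n ∣ (i + (i + 1)) := by
    intro i h1 h2 hiH
    apply not_dvd_of_window (by omega) (by omega)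
    rcases hh_def (n := n) with ⟨hp, hv⟩ | ⟨hp, hv⟩ <;> omega
  have h2H : ¬ n ∣ ((H - 1) + (H + 1)) := by
    apply not_dvd_of_window (by omega) (by omega)
    rcases hh_def (n := n) with ⟨hp, hv⟩ | ⟨hp, hv⟩ <;> omega
  have hsplit : natL n ++ [1]
      = List.range' 1 (H - 1) ++ (List.range' (H + 1) (n - 1 - H) ++ [H, 1]) := by
    unfold natL
    rw [← hHdef]
    simp [List.append_assoc]
  rw [hsplit]
  show List.IsChain _ _
  rw [List.isChain_append]
  refine ⟨?_, ?_, ?_⟩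
  · exact chain'_range'_of _ _
      (fun i hi1 hi2 => ⟨by omega, hkey i (by omega) (by omega) (by omega)⟩)
  · rw [List.isChain_append]
    refine ⟨chain'_range'_of _ _
      (fun i hi1 hi2 => ⟨by omega, hkey i (by omega) (by omega) (by omega)⟩), ?_, ?_⟩
    · exact List.isChain_cons_cons.2
        ⟨⟨by omega, not_dvd_of_window (by omega) (by omega) (by omega)⟩, by simp⟩
    · intro x hx y hy
      rw [List.getLast?_range', if_neg (by omega)] at hx
      simp only [List.head?_cons, Option.mem_def, Option.some.injEq] at hx hy
      subst hx; subst hy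
      exact ⟨by omega, not_dvd_of_window (by omega) (by omega) (by omega)⟩
  · intro x hx y hy
    rw [List.getLast?_range', if_neg (by omega)] at hx
    rw [show n - 1 - H = (n - 2 - H) + 1 by omega, List.range'_succ] at hy
    simp only [List.cons_append, List.head?_cons, Option.mem_def, Option.some.injEq] at hx hy
    subst hx; subst hy
    refine ⟨by omega, ?_⟩
    have he : 1 + (H - 1) - 1 + (H + 1) = (H - 1) + (H + 1) := by omega
    rw [he]
    exact h2H

lemma natL_perm {n : ℕ} (hn : 5 ≤ n) : (natL n).Perm (List.range' 1 (n - 1)) := by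
  obtain ⟨hH2, hH3⟩ := hh_bounds hn
  set H := hh n with hHdef
  have key : List.range' 1 (n - 1)
      = List.range' 1 (H - 1) ++ ([H] ++ List.range' (H + 1) (n - 1 - H)) := by
    have e1 : [H] ++ List.range' (H + 1) (n - 1 - H) = List.range' H (n - H) := by
      have e0 : [H] = List.range' H 1 := by simp
      rw [e0, List.range'_append]
      congr 1
      omega
    rw [e1]
    have := List.range'_append (s := 1) (m := H - 1) (n := n - H) (step := 1)
    rw [show 1 + 1 * (H - 1) = H by omega, show H - 1 + (n - H) = n - 1 by omega] at this
    exact this.symm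
  rw [key]
  unfold natL
  rw [← hHdef, List.append_assoc]
  exact List.Perm.append_left _ List.perm_append_comm

lemma natL_mem {n : ℕ} (hn : 5 ≤ n) (x : ℕ) : x ∈ natL n ↔ 1 ≤ x ∧ x ≤ n - 1 := by
  rw [(natL_perm hn).mem_iff, List.mem_range'_1]
  omega

lemma natL_nodup {n : ℕ} (hn : 5 ≤ n) : (natL n).Nodup :=
  (natL_perm hn).nodup_iff.2 (List.nodup_range' (s := 1) (n := n - 1))

lemma natL_length {n : ℕ} (hn : 5 ≤ n) : (natL n).length = n - 1 := by
  rw [(natL_perm hn).length_eq, List.length_range']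

lemma natL_head {n : ℕ} (hn : 5 ≤ n) : (natL n).head? = some 1 := by
  obtain ⟨hH2, hH3⟩ := hh_bounds hn
  unfold natL
  rw [show hh n - 1 = (hh n - 2) + 1 by omega, List.range'_succ]
  simp

lemma chain'_pmap {n : ℕ} :
    ∀ (l : List ℕ) (H : ∀ x ∈ l, 1 ≤ x ∧ x ≤ n - 1),
      List.Chain' (fun a b => a ≠ b ∧ ¬ n ∣ (a + b)) l →
      List.Chain' (dynkinGraph n).Adj
        (List.pmap (fun x h => (⟨x, h⟩ : {i : ℕ // 1 ≤ i ∧ i ≤ n - 1})) l H)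
  | [], _, _ => List.IsChain.nil
  | [x], _, _ => List.IsChain.singleton _
  | x :: y :: l, H, hc => by
      simp only [List.Chain', List.isChain_cons_cons] at hc
      have ih := chain'_pmap (y :: l) (fun a ha => H a (List.mem_cons_of_mem _ ha)) hc.2
      refine List.isChain_cons.2 ⟨?_, ih⟩
      intro b hb
      simp only [List.pmap, List.head?_cons, Option.mem_def, Option.some.injEq] at hb
      subst hb
      exact ⟨fun e => hc.1.1 (congrArg Subtype.val e), hc.1.2⟩

lemma pmap_head? {n : ℕ} (l : List ℕ) (H : ∀ x ∈ l, 1 ≤ x ∧ x ≤ n - 1)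
    (hx : l.head? = some 1) (h1 : (1 : ℕ) ≤ 1 ∧ 1 ≤ n - 1) :
    (List.pmap (fun x h => (⟨x, h⟩ : {i : ℕ // 1 ≤ i ∧ i ≤ n - 1})) l H).head?
      = some ⟨1, h1⟩ := by
  cases l with
  | nil => simp at hx
  | cons a t =>
    simp only [List.head?_cons, Option.some.injEq] at hx
    subst hx
    rfl

theorem stmt_9 (n : ℕ) (hn : 5 ≤ n) :
    ∃ (v : {i : ℕ // 1 ≤ i ∧ i ≤ n - 1}) (c : (dynkinGraph n).Walk v v),
      c.IsHamiltonianCycle := by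
  have h1 : (1 : ℕ) ≤ 1 ∧ 1 ≤ n - 1 := ⟨le_refl _, by omega⟩
  set V := {i : ℕ // 1 ≤ i ∧ i ≤ n - 1}
  set v1 : V := ⟨1, h1⟩ with hv1
  have hmem : ∀ x ∈ natL n, 1 ≤ x ∧ x ≤ n - 1 := fun x hx => (natL_mem hn x).1 hx
  set Lsub : List V := (natL n).pmap (fun x h => ⟨x, h⟩) hmem with hLsub
  refine ⟨v1, ham_of_list' Lsub v1 ?_ ?_ ?_ ?_ ?_⟩
  · rw [hLsub, List.length_pmap, natL_length hn]; omega
  · exact pmap_head? (natL n) hmem (natL_head hn) h1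
  · have hmem' : ∀ x ∈ natL n ++ [1], 1 ≤ x ∧ x ≤ n - 1 := by
      intro x hx
      rcases List.mem_append.1 hx with h | h
      · exact hmem x h
      · simp at h; omega
    have := chain'_pmap (natL n ++ [1]) hmem' (natL_chain hn)
    rw [List.pmap_append] at this
    simpa using this
  · exact List.Nodup.pmap (fun a ha b hb e => congrArg Subtype.val e) (natL_nodup hn)
  · intro w
    rw [hLsub]
    exact List.mem_pmap.2 ⟨w.1, (natL_mem hn w.1).2 w.2, Subtype.ext rfl⟩
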